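/- Let −∞ < κ₁ < κ₂ < +∞ and P, Q ∈ SO₃(ℝ). Let α_k, α₀ ∈ 𝓟_{κ₁}^{κ₂}(P,Q) be parametrized with constant speed on [0,1], and suppose d⁰(α_k, α₀) → 0 as k → ∞. Then α̇_k converges to α̇₀ uniformly on [0,1]. -/

import Mathlib

open MeasureTheory Real Set Filter Topology NNReal RealInnerProductSpace

noncomputable section

namespace Curves

/-- `ℝ³` with the Euclidean inner product. -/
abbrev E3 : Type := EuclideanSpace ℝ (Fin 3)

/-- The cross product on `ℝ³`. -/
def cross (x y : E3) : E3 :=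
  (EuclideanSpace.equiv (Fin 3) ℝ).symm
    ![x 1 * y 2 - x 2 * y 1, x 2 * y 0 - x 0 * y 2, x 0 * y 1 - x 1 * y 0]

/-- The intrinsic (angular) distance on the unit sphere `𝕊² ⊆ ℝ³`. -/
def sdist (x y : E3) : ℝ := Real.arccos (inner ℝ x y)

/-- `arccot : ℝ → (0, π)`. -/
def arccot (x : ℝ) : ℝ := π / 2 - Real.arctan x

/-- A `C¹` regular curve with values in the unit sphere `𝕊²`, defined on the interval `[a, b]`,
recorded together with its (continuous, nonvanishing) derivative. -/
structure C1Curve (a b : ℝ) where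
  toFun : ℝ → E3
  deriv : ℝ → E3
  mem_sphere : ∀ t ∈ Set.Icc a b, ‖toFun t‖ = 1
  hasDeriv : ∀ t ∈ Set.Icc a b, HasDerivWithinAt toFun (deriv t) (Set.Icc a b) t
  deriv_cont : ContinuousOn deriv (Set.Icc a b)
  regular : ∀ t ∈ Set.Icc a b, deriv t ≠ 0

variable {a b : ℝ}

/-- The unit tangent vector `𝐭_γ(t) = γ̇(t)/|γ̇(t)|`. -/
def tangent (γ : C1Curve a b) (t : ℝ) : E3 := ‖γ.deriv t‖⁻¹ • γ.deriv t

/-- The unit normal vector `𝐧_γ(t) = γ(t) × 𝐭_γ(t)`. -/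
def normal (γ : C1Curve a b) (t : ℝ) : E3 := cross (γ.toFun t) (tangent γ t)

/-- The length `L_γ` of the curve. -/
def clength (γ : C1Curve a b) : ℝ := ∫ t in a..b, ‖γ.deriv t‖

/-- The arc length function `s(t) = ∫_a^t |γ̇|`. -/
def arcLen (γ : C1Curve a b) (t : ℝ) : ℝ := ∫ u in a..t, ‖γ.deriv u‖

/-- The curve is parametrized by arc length. -/
def UnitSpeed (γ : C1Curve a b) : Prop := ∀ t ∈ Set.Icc a b, ‖γ.deriv t‖ = 1

/-- The curve is parametrized with constant speed `|γ̇| ≡ L_γ`. -/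
def ConstantSpeed (γ : C1Curve a b) : Prop := ∀ t ∈ Set.Icc a b, ‖γ.deriv t‖ = clength γ

/-- The circle of center `c ∈ 𝕊²` and spherical radius `r ∈ (0,π)`, oriented anticlockwise
about `c`, passes through `γ(t₁)` with the same unit tangent vector as `γ` there.
(The unit tangent of the anticlockwise circle at a point `x` on it is `(sin r)⁻¹ (c × x)`.) -/
def IsTangentCircleAt (γ : C1Curve a b) (t₁ : ℝ) (c : E3) (r : ℝ) : Prop :=
  ‖c‖ = 1 ∧ r ∈ Set.Ioo 0 π ∧ sdist (γ.toFun t₁) c = r ∧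
    tangent γ t₁ = (Real.sin r)⁻¹ • cross c (γ.toFun t₁)

/-- The circle of center `c` and radius `r` is tangent from the left to `γ` at `γ(t₁)`. -/
def TangentFromLeft (γ : C1Curve a b) (t₁ : ℝ) (c : E3) (r : ℝ) : Prop :=
  IsTangentCircleAt γ t₁ c r ∧
    ∃ δ > 0, ∀ t ∈ Set.Ioo (t₁ - δ) (t₁ + δ) ∩ Set.Icc a b, r ≤ sdist (γ.toFun t) c

/-- The circle of center `c` and radius `r` is tangent from the right to `γ` at `γ(t₁)`. -/
def TangentFromRight (γ : C1Curve a b) (t₁ : ℝ) (c : E3) (r : ℝ) : Prop :=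
  IsTangentCircleAt γ t₁ c r ∧
    ∃ δ > 0, ∀ t ∈ Set.Ioo (t₁ - δ) (t₁ + δ) ∩ Set.Icc a b, sdist (γ.toFun t) c ≤ r

/-- The upper curvature `κ⁺_γ(t)`: the infimum of `cot r` over all circles tangent from the
left to `γ` at `γ(t)` (with `inf ∅ = +∞`), as an extended real number. -/
def upperCurv (γ : C1Curve a b) (t : ℝ) : EReal :=
  sInf {x : EReal | ∃ c r, TangentFromLeft γ t c r ∧ x = ((Real.cot r : ℝ) : EReal)}

/-- The lower curvature `κ⁻_γ(t)`: the supremum of `cot r` over all circles tangent from the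
right to `γ` at `γ(t)` (with `sup ∅ = -∞`), as an extended real number. -/
def lowerCurv (γ : C1Curve a b) (t : ℝ) : EReal :=
  sSup {x : EReal | ∃ c r, TangentFromRight γ t c r ∧ x = ((Real.cot r : ℝ) : EReal)}

/-- The matrix with columns `x`, `y`, `z`. -/
def colMatrix (x y z : E3) : Matrix (Fin 3) (Fin 3) ℝ :=
  Matrix.of fun i j => ![x, y, z] j i

/-- The Frenet frame `𝔉_γ(t)`, the matrix with columns `γ(t)`, `𝐭_γ(t)`, `𝐧_γ(t)`. -/
def frenet (γ : C1Curve a b) (t : ℝ) : Matrix (Fin 3) (Fin 3) ℝ :=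
  colMatrix (γ.toFun t) (tangent γ t) (normal γ t)

/-- `SO₃(ℝ)`. -/
abbrev SO3 := Matrix.specialOrthogonalGroup (Fin 3) ℝ

/-- Lebesgue measure restricted to `[0,1]`. -/
def μ01 : Measure ℝ := volume.restrict (Set.Icc (0:ℝ) 1)

/-- Membership in `𝓘(P,Q)`: the Frenet frame equals `P` at `t = 0` and `Q` at `t = 1`. -/
def MemI (P Q : Matrix (Fin 3) (Fin 3) ℝ) (γ : C1Curve 0 1) : Prop :=
  frenet γ 0 = P ∧ frenet γ 1 = Q

/-- `κ` is the a.e. geodesic curvature of `γ : [0,1] → 𝕊²`: almost everywhere the unit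
tangent vector is differentiable with `d𝐭/dt = |γ̇| (-γ + κ 𝐧)`
(i.e. `𝐭' = -γ + κ𝐧` with respect to arc length). -/
def IsCurvature (γ : C1Curve 0 1) (κ : ℝ → ℝ) : Prop :=
  Measurable κ ∧
    ∀ᵐ t ∂μ01, HasDerivWithinAt (tangent γ)
      (‖γ.deriv t‖ • (-(γ.toFun t) + κ t • normal γ t)) (Set.Icc 0 1) t

/-- Membership in `𝓟_{κ₁}^{κ₂}(P,Q)`: `γ ∈ 𝓘(P,Q)`, `γ̇` is Lipschitz continuous, and the
a.e. defined geodesic curvature `κ` satisfies `κ₁ < essinf κ ≤ esssup κ < κ₂`. -/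
def MemP (κ₁ κ₂ : ℝ) (P Q : Matrix (Fin 3) (Fin 3) ℝ) (γ : C1Curve 0 1) : Prop :=
  MemI P Q γ ∧ (∃ K : ℝ≥0, LipschitzOnWith K γ.deriv (Set.Icc 0 1)) ∧
  ∃ κ : ℝ → ℝ, IsCurvature γ κ ∧
    (κ₁ : EReal) < essInf (fun t => ((κ t : ℝ) : EReal)) μ01 ∧
    essInf (fun t => ((κ t : ℝ) : EReal)) μ01 ≤ essSup (fun t => ((κ t : ℝ) : EReal)) μ01 ∧
    essSup (fun t => ((κ t : ℝ) : EReal)) μ01 < (κ₂ : EReal)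

/-- Membership in `𝓢_{κ₁}^{κ₂}(P,Q)`: `γ ∈ 𝓘(P,Q)` and
`κ₁ < inf_{t ∈ [0,1]} κ⁻_γ(t) ≤ sup_{t ∈ [0,1]} κ⁺_γ(t) < κ₂`. -/
def MemS (κ₁ κ₂ : ℝ) (P Q : Matrix (Fin 3) (Fin 3) ℝ) (γ : C1Curve 0 1) : Prop :=
  MemI P Q γ ∧
    (κ₁ : EReal) < (⨅ t : Set.Icc (0:ℝ) 1, lowerCurv γ ↑t) ∧
    (⨅ t : Set.Icc (0:ℝ) 1, lowerCurv γ ↑t) ≤ (⨆ t : Set.Icc (0:ℝ) 1, upperCurv γ ↑t) ∧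
    (⨆ t : Set.Icc (0:ℝ) 1, upperCurv γ ↑t) < (κ₂ : EReal)

/-- Pointwise two-sided curvature bounds `κ₁ < κ⁻_γ(t) ≤ κ⁺_γ(t) < κ₂` on the whole domain,
i.e. membership in `𝓛_{κ₁}^{κ₂}` (apart from the endpoint conditions). -/
def CurvBetween (κ₁ κ₂ : ℝ) (γ : C1Curve a b) : Prop :=
  ∀ t ∈ Set.Icc a b,
    (κ₁ : EReal) < lowerCurv γ t ∧ lowerCurv γ t ≤ upperCurv γ t ∧
      upperCurv γ t < (κ₂ : EReal)

/-- The `C⁰` distance `d⁰(α,β) = max_t d(α(t), β(t))`. -/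
def d0 (α β : C1Curve 0 1) : ℝ := ⨆ t : Set.Icc (0:ℝ) 1, sdist (α.toFun ↑t) (β.toFun ↑t)

/-- The `C¹` distance `d̄¹(α,β) = max_t [d(α(t),β(t)) + |α̇(t) - β̇(t)|]`. -/
def d1bar (α β : C1Curve 0 1) : ℝ :=
  ⨆ t : Set.Icc (0:ℝ) 1, (sdist (α.toFun ↑t) (β.toFun ↑t) + ‖α.deriv ↑t - β.deriv ↑t‖)

/-- `h(t) = t - t⁻¹`, a diffeomorphism `(0,∞) → ℝ`. -/
def hfun (t : ℝ) : ℝ := t - t⁻¹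

/-- The inverse of `h : (0,∞) → ℝ`. -/
def hInv (y : ℝ) : ℝ := Function.invFunOn hfun (Set.Ioi 0) y

/-- `h_{κ₁,κ₂}(t) = (κ₁ - t)⁻¹ + (κ₂ - t)⁻¹`, a diffeomorphism `(κ₁,κ₂) → ℝ`. -/
def hk (κ₁ κ₂ t : ℝ) : ℝ := (κ₁ - t)⁻¹ + (κ₂ - t)⁻¹

/-- The inverse of `h_{κ₁,κ₂} : (κ₁,κ₂) → ℝ`. -/
def hkInv (κ₁ κ₂ y : ℝ) : ℝ := Function.invFunOn (hk κ₁ κ₂) (Set.Ioo κ₁ κ₂) y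

/-- `(v, w)` is a `(κ₁,κ₂)`-strongly admissible pair of coefficients: `v = h⁻¹(v̂)` and
`w = v ⬝ h_{κ₁,κ₂}⁻¹(ŵ)` for some pair `(v̂, ŵ) ∈ L^∞[0,1] × L^∞[0,1]`; equivalently `v, w`
are measurable with `v > 0`, `w/v ∈ (κ₁,κ₂)`, and `h ∘ v` and `h_{κ₁,κ₂} ∘ (w/v)` are
bounded on `[0,1]`. -/
def StronglyAdmissiblePair (κ₁ κ₂ : ℝ) (v w : ℝ → ℝ) : Prop :=
  Measurable v ∧ Measurable w ∧
  (∀ t, 0 < v t) ∧ (∀ t, w t / v t ∈ Set.Ioo κ₁ κ₂) ∧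
  (∃ C : ℝ, ∀ t ∈ Set.Icc (0:ℝ) 1, |hfun (v t)| ≤ C) ∧
  (∃ C : ℝ, ∀ t ∈ Set.Icc (0:ℝ) 1, |hk κ₁ κ₂ (w t / v t)| ≤ C)

/-- The columns `f₁, f₂, f₃` form a Lipschitz (`W^{1,∞}`) solution of the frame ODE
`Φ' = Φ Λ` on `[0,1]`, where `Λ` has entries `Λ₁₂ = -v`, `Λ₂₁ = v`, `Λ₂₃ = -w`, `Λ₃₂ = w`. -/
def FrameODE (v w : ℝ → ℝ) (f₁ f₂ f₃ : ℝ → E3) : Prop :=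
  (∃ K : ℝ≥0, LipschitzOnWith K f₁ (Set.Icc 0 1)) ∧
  (∃ K : ℝ≥0, LipschitzOnWith K f₂ (Set.Icc 0 1)) ∧
  (∃ K : ℝ≥0, LipschitzOnWith K f₃ (Set.Icc 0 1)) ∧
  (∀ᵐ t ∂μ01,
    HasDerivWithinAt f₁ (v t • f₂ t) (Set.Icc 0 1) t ∧
    HasDerivWithinAt f₂ (-(v t) • f₁ t + w t • f₃ t) (Set.Icc 0 1) t ∧
    HasDerivWithinAt f₃ (-(w t) • f₂ t) (Set.Icc 0 1) t)

/-- The `(κ₁,κ₂)`-strongly admissible parametrized curve `f = Φ e₁` corresponds to the pair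
`(v̂, ŵ) ∈ ℝ × L^∞[0,1]` (with `v̂` constant), with frame solving `Φ' = ΦΛ`, `Φ(0) = P`,
`Φ(1) = Q`. -/
def Corr16 (κ₁ κ₂ : ℝ) (P Q : Matrix (Fin 3) (Fin 3) ℝ)
    (p : ℝ × Lp ℝ ⊤ μ01) (f : ℝ → E3) : Prop :=
  ∃ f₂ f₃ : ℝ → E3,
    FrameODE (fun _ => hInv p.1) (fun t => hInv p.1 * hkInv κ₁ κ₂ (p.2 t)) f f₂ f₃ ∧
    colMatrix (f 0) (f₂ 0) (f₃ 0) = P ∧ colMatrix (f 1) (f₂ 1) (f₃ 1) = Q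

/-- The set `B = {(v̂, ŵ) ∈ ℝ × L^∞[0,1] : Φ_{(v̂,ŵ)}(1) = Q}` (with `Φ_{(v̂,ŵ)}(0) = P`). -/
def BSet (κ₁ κ₂ : ℝ) (P Q : Matrix (Fin 3) (Fin 3) ℝ) : Set (ℝ × Lp ℝ ⊤ μ01) :=
  {p | ∃ f : ℝ → E3, Corr16 κ₁ κ₂ P Q p f}

end Curves

namespace Curves


/-! ### Auxiliary lemmas -/

lemma norm_sub_le_sdist (x y : E3) (hx : ‖x‖ = 1) (hy : ‖y‖ = 1) : ‖x - y‖ ≤ sdist x y := by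
  rw [sdist]
  set c : ℝ := inner ℝ x y with hc
  have hc1 : |c| ≤ 1 := by simpa [hx, hy] using abs_real_inner_le_norm x y
  set θ := Real.arccos c with hθ
  have hθ0 : 0 ≤ θ := Real.arccos_nonneg c
  have hθπ : θ ≤ π := Real.arccos_le_pi c
  have hcos : Real.cos θ = c := Real.cos_arccos (abs_le.mp hc1).1 (abs_le.mp hc1).2
  have hns : ‖x - y‖^2 = 2 - 2*Real.cos θ := by
    rw [norm_sub_sq_real, hx, hy, hcos]; ring
  have hhalf : 1 - Real.cos θ = 2 * Real.sin (θ/2)^2 := by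
    have h := Real.cos_two_mul (θ/2)
    have h2 : 2*(θ/2) = θ := by ring
    rw [h2] at h
    nlinarith [Real.sin_sq_add_cos_sq (θ/2)]
  have hs1 : Real.sin (θ/2) ≤ θ/2 := Real.sin_le (by linarith)
  have hs0 : 0 ≤ Real.sin (θ/2) := Real.sin_nonneg_of_nonneg_of_le_pi (by linarith) (by linarith)
  have hsq : ‖x - y‖^2 ≤ θ^2 := by nlinarith
  nlinarith [norm_nonneg (x - y)]

lemma norm_cross_le (x y : E3) : ‖cross x y‖ ≤ ‖x‖ * ‖y‖ := by
  have h1 : ‖cross x y‖^2 ≤ (‖x‖*‖y‖)^2 := by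
    have hx : ‖x‖^2 = x 0^2 + x 1^2 + x 2^2 := by
      rw [EuclideanSpace.norm_eq, Real.sq_sqrt (by positivity)]
      simp [Fin.sum_univ_three, sq]
    have hy : ‖y‖^2 = y 0^2 + y 1^2 + y 2^2 := by
      rw [EuclideanSpace.norm_eq, Real.sq_sqrt (by positivity)]
      simp [Fin.sum_univ_three, sq]
    have hc : ‖cross x y‖^2 = (x 1 * y 2 - x 2 * y 1)^2 + (x 2 * y 0 - x 0 * y 2)^2
        + (x 0 * y 1 - x 1 * y 0)^2 := by
      rw [EuclideanSpace.norm_eq, Real.sq_sqrt (by positivity)]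
      simp [cross, Fin.sum_univ_three, sq]
    rw [hc, mul_pow, hx, hy]
    nlinarith [sq_nonneg (x 0 * y 0 + x 1 * y 1 + x 2 * y 2)]
  nlinarith [norm_nonneg (cross x y), norm_nonneg x, norm_nonneg y,
    mul_nonneg (norm_nonneg x) (norm_nonneg y)]

set_option maxHeartbeats 2000000 in
lemma key {E : Type*} [NormedAddCommGroup E] [NormedSpace ℝ E]
    (g g' : ℝ → E) (K : ℝ≥0) (hg : LipschitzOnWith K g (Icc 0 1))
    (C : ℝ) (hC : 0 ≤ C)
    (hae : ∀ᵐ t ∂(volume.restrict (Icc (0:ℝ) 1)),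
      HasDerivWithinAt g (g' t) (Icc 0 1) t ∧ ‖g' t‖ ≤ C) :
    ∀ x ∈ Icc (0:ℝ) 1, ∀ y ∈ Icc (0:ℝ) 1, ‖g y - g x‖ ≤ C * |y - x| := by
  rw [ae_restrict_iff' measurableSet_Icc] at hae
  rw [ae_iff] at hae
  set N := {t : ℝ | ¬ (t ∈ Icc (0:ℝ) 1 →
      HasDerivWithinAt g (g' t) (Icc 0 1) t ∧ ‖g' t‖ ≤ C)} with hN
  -- main claim for x ≤ y
  have main : ∀ x ∈ Icc (0:ℝ) 1, ∀ y ∈ Icc (0:ℝ) 1, x ≤ y → ‖g y - g x‖ ≤ C * (y - x) := by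
    intro x hx y hy hxy
    refine le_of_forall_pos_le_add (fun ε' hε' => ?_)
    set ε : ℝ := ε' / ((y - x) + (K:ℝ) + 2) with hεdef
    have hden : (0:ℝ) < (y - x) + (K:ℝ) + 2 := by
      have := K.coe_nonneg; linarith
    have hε : 0 < ε := div_pos hε' hden
    -- open set U
    obtain ⟨U, hNU, hUopen, hUlt⟩ := exists_isOpen_lt_of_lt N (ENNReal.ofReal ε)
      (by rw [hae]; exact ENNReal.ofReal_pos.mpr hε)
    have hUfin : volume U ≠ ⊤ := (hUlt.trans ENNReal.ofReal_lt_top).ne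
    set m : ℝ → ℝ := fun u => (volume (U ∩ Icc x u)).toReal with hm
    have hfin : ∀ u, volume (U ∩ Icc x u) ≠ ⊤ :=
      fun u => (((measure_mono inter_subset_left).trans_lt hUlt).trans ENNReal.ofReal_lt_top).ne
    have hmono : ∀ {u v : ℝ}, u ≤ v → m u ≤ m v := by
      intro u v huv
      exact ENNReal.toReal_mono (hfin v)
        (measure_mono (inter_subset_inter_right _ (Icc_subset_Icc_right huv)))
    have hm0 : ∀ u, 0 ≤ m u := fun u => ENNReal.toReal_nonneg
    have hmx : m x = 0 := by
      have h1 : volume (U ∩ Icc x x) ≤ volume (Icc x x) := measure_mono inter_subset_right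
      simp only [Icc_self, Real.volume_singleton, le_zero_iff] at h1
      simp [hm, h1]
    have hmU : ∀ u, m u ≤ (volume U).toReal :=
      fun u => ENNReal.toReal_mono hUfin (measure_mono inter_subset_left)
    have hUε : (volume U).toReal < ε := ENNReal.toReal_lt_of_lt_ofReal hUlt
    have hmadd : ∀ {u v : ℝ}, x ≤ u → u ≤ v →
        m u + (volume (U ∩ Ioc u v)).toReal ≤ m v := by
      intro u v hxu huv
      have hdisj : Disjoint (U ∩ Icc x u) (U ∩ Ioc u v) := by
        refine Set.disjoint_left.mpr (fun t ht ht' => ?_)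
        exact absurd ht'.2.1 (not_lt.mpr ht.2.2)
      have hmeas : MeasurableSet (U ∩ Ioc u v) :=
        (hUopen.measurableSet.inter measurableSet_Ioc)
      have hsub : (U ∩ Icc x u) ∪ (U ∩ Ioc u v) ⊆ U ∩ Icc x v := by
        rintro t (⟨h1, h2⟩ | ⟨h1, h2⟩)
        · exact ⟨h1, h2.1, h2.2.trans huv⟩
        · exact ⟨h1, hxu.trans h2.1.le, h2.2⟩
      have hfin2 : volume (U ∩ Ioc u v) ≠ ⊤ :=
        (((measure_mono inter_subset_left).trans_lt hUlt).trans ENNReal.ofReal_lt_top).ne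
      rw [hm, ← ENNReal.toReal_add (hfin u) hfin2]
      exact ENNReal.toReal_mono (hfin v)
        (by rw [← measure_union hdisj hmeas]; exact measure_mono hsub)
    -- the set S
    set S : Set ℝ := {u | u ∈ Icc x y ∧
      ‖g u - g x‖ ≤ (C + ε) * (u - x) + ((K:ℝ) + 1) * m u} with hS
    have hxS : x ∈ S := by
      refine ⟨⟨le_refl x, hxy⟩, ?_⟩
      simp only [sub_self, norm_zero, mul_zero, zero_add]
      have := hm0 x; have := K.coe_nonneg; nlinarith
    have hne : S.Nonempty := ⟨x, hxS⟩
    have hbdd : BddAbove S := ⟨y, fun u hu => hu.1.2⟩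
    set c := sSup S with hcdef
    have hxc : x ≤ c := le_csSup hbdd hxS
    have hcy : c ≤ y := csSup_le hne (fun u hu => hu.1.2)
    have hcI : c ∈ Icc (0:ℝ) 1 := ⟨hx.1.trans hxc, hcy.trans hy.2⟩
    have hCε : (0:ℝ) < C + ε := by linarith
    have hK0 := K.coe_nonneg
    -- c ∈ S
    have hcS : ‖g c - g x‖ ≤ (C + ε) * (c - x) + ((K:ℝ) + 1) * m c := by
      refine le_of_forall_pos_le_add (fun η hη => ?_)
      have hη' : 0 < η / ((K:ℝ) + 1) := by positivity
      obtain ⟨u, huS, hu⟩ := exists_lt_of_lt_csSup hne (by linarith : c - η / ((K:ℝ)+1) < c)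
      have huc : u ≤ c := le_csSup hbdd huS
      have huI : u ∈ Icc (0:ℝ) 1 := ⟨hx.1.trans huS.1.1, huS.1.2.trans hy.2⟩
      have hlip : ‖g c - g u‖ ≤ (K:ℝ) * (c - u) := by
        have h2 := hg.dist_le_mul c hcI u huI
        rwa [dist_eq_norm, Real.dist_eq, abs_of_nonneg (by linarith)] at h2
      have hKc : (K:ℝ) * (c - u) ≤ η := by
        have h3 : c - u ≤ η / ((K:ℝ) + 1) := by linarith
        have h4 : ((K:ℝ)+1) * (c - u) ≤ ((K:ℝ)+1) * (η / ((K:ℝ)+1)) := by nlinarith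
        have h5 : ((K:ℝ)+1) * (η / ((K:ℝ)+1)) = η := by field_simp
        nlinarith
      calc ‖g c - g x‖ ≤ ‖g c - g u‖ + ‖g u - g x‖ := norm_sub_le_norm_sub_add_norm_sub _ _ _
        _ ≤ (K:ℝ) * (c - u) + ((C + ε) * (u - x) + ((K:ℝ) + 1) * m u) :=
            add_le_add hlip huS.2
        _ ≤ (C + ε) * (c - x) + ((K:ℝ) + 1) * m c + η := by
            have h1 : (C + ε) * (u - x) ≤ (C + ε) * (c - x) := by nlinarith
            have h2 : ((K:ℝ) + 1) * m u ≤ ((K:ℝ) + 1) * m c := by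
              have := hmono huc; nlinarith
            linarith
    -- c = y
    have hcy' : c = y := by
      by_contra hne'
      have hclty : c < y := lt_of_le_of_ne hcy hne'
      -- produce u ∈ S with u > c, contradiction
      have hcontr : ∀ u, u ∈ S → c < u → False := fun u huS hcu =>
        absurd (le_csSup hbdd huS) (not_le.mpr hcu)
      by_cases hcU : c ∈ U
      · obtain ⟨δ, hδ, hball⟩ := Metric.isOpen_iff.mp hUopen c hcU
        set u := min y (c + δ/2) with hu
        have hcu : c < u := lt_min hclty (by linarith)
        have huy : u ≤ y := min_le_left _ _
        have huI : u ∈ Icc (0:ℝ) 1 := ⟨hx.1.trans (hxc.trans hcu.le), huy.trans hy.2⟩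
        have hIoc : Ioc c u ⊆ U := by
          intro t ht
          apply hball
          rw [Metric.mem_ball, Real.dist_eq, abs_of_pos (by linarith [ht.1])]
          have := min_le_right y (c + δ/2)
          have := ht.2
          linarith
        have hmu : m c + (u - c) ≤ m u := by
          have h1 := hmadd hxc hcu.le
          rwa [inter_eq_self_of_subset_right hIoc, Real.volume_Ioc,
            ENNReal.toReal_ofReal (by linarith)] at h1
        have hlip : ‖g u - g c‖ ≤ (K:ℝ) * (u - c) := by
          have h2 := hg.dist_le_mul u huI c hcI
          rwa [dist_eq_norm, Real.dist_eq, abs_of_nonneg (by linarith)] at h2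
        refine hcontr u ⟨⟨hxc.trans hcu.le, huy⟩, ?_⟩ hcu
        calc ‖g u - g x‖ ≤ ‖g u - g c‖ + ‖g c - g x‖ := norm_sub_le_norm_sub_add_norm_sub _ _ _
          _ ≤ (K:ℝ) * (u - c) + ((C + ε) * (c - x) + ((K:ℝ) + 1) * m c) := add_le_add hlip hcS
          _ ≤ (C + ε) * (u - x) + ((K:ℝ) + 1) * m u := by
              have e1 : ((K:ℝ)+1) * m c + ((K:ℝ)+1)*(u-c) ≤ ((K:ℝ)+1) * m u := by nlinarith
              have e2 : (C+ε)*(c-x) + (C+ε)*(u-c) = (C+ε)*(u-x) := by ring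
              have e3 : (K:ℝ)*(u-c) ≤ ((K:ℝ)+1)*(u-c) + (C+ε)*(u-c) := by nlinarith
              linarith
      · -- c ∉ U, so derivative exists and is bounded at c
        have hcN : c ∉ N := fun h => hcU (hNU h)
        have hder' : ¬¬(c ∈ Icc (0:ℝ) 1 →
            HasDerivWithinAt g (g' c) (Icc 0 1) c ∧ ‖g' c‖ ≤ C) := hcN
        rw [not_not] at hder'
        obtain ⟨hd, hbound⟩ := hder' hcI
        have hlo := (hasDerivWithinAt_iff_isLittleO.mp hd).def hε
        rw [eventually_nhdsWithin_iff] at hlo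
        obtain ⟨δ, hδ, hball⟩ := Metric.eventually_nhds_iff.mp hlo
        set u := min y (c + δ/2) with hu
        have hcu : c < u := lt_min hclty (by linarith)
        have huy : u ≤ y := min_le_left _ _
        have huI : u ∈ Icc (0:ℝ) 1 := ⟨hx.1.trans (hxc.trans hcu.le), huy.trans hy.2⟩
        have hud : dist u c < δ := by
          rw [Real.dist_eq, abs_of_pos (by linarith)]
          have := min_le_right y (c + δ/2)
          linarith
        have hest : ‖g u - g c - (u - c) • g' c‖ ≤ ε * ‖u - c‖ := hball hud huI
        have hgu : ‖g u - g c‖ ≤ (C + ε) * (u - c) := by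
          have h1 : ‖g u - g c‖ ≤ ‖g u - g c - (u - c) • g' c‖ + ‖(u - c) • g' c‖ := by
            have := norm_add_le (g u - g c - (u - c) • g' c) ((u - c) • g' c)
            simpa using this
          have h2 : ‖(u - c) • g' c‖ ≤ (u - c) * C := by
            rw [norm_smul, Real.norm_eq_abs, abs_of_nonneg (by linarith)]
            exact mul_le_mul_of_nonneg_left hbound (by linarith)
          have h3 : ε * ‖u - c‖ = ε * (u - c) := by
            rw [Real.norm_eq_abs, abs_of_nonneg (by linarith)]
          nlinarith
        refine hcontr u ⟨⟨hxc.trans hcu.le, huy⟩, ?_⟩ hcu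
        calc ‖g u - g x‖ ≤ ‖g u - g c‖ + ‖g c - g x‖ := norm_sub_le_norm_sub_add_norm_sub _ _ _
          _ ≤ (C + ε) * (u - c) + ((C + ε) * (c - x) + ((K:ℝ) + 1) * m c) := add_le_add hgu hcS
          _ ≤ (C + ε) * (u - x) + ((K:ℝ) + 1) * m u := by
              have e1 : ((K:ℝ)+1) * m c ≤ ((K:ℝ)+1) * m u := by
                have := hmono hcu.le; nlinarith
              have e2 : (C+ε)*(c-x) + (C+ε)*(u-c) = (C+ε)*(u-x) := by ring
              linarith
      -- end cases
    -- conclude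
    have hfinal : ‖g y - g x‖ ≤ (C + ε) * (y - x) + ((K:ℝ) + 1) * m y := hcy' ▸ hcS
    have : ((K:ℝ) + 1) * m y ≤ ((K:ℝ) + 1) * ε := by nlinarith [hmU y, hm0 y]
    have hεle : ε * ((y - x) + (K:ℝ) + 2) = ε' := by
      rw [hεdef]; field_simp
    have h6 : ε * ((y - x) + (K:ℝ) + 1) ≤ ε' := by
      rw [← hεle]; nlinarith
    have hexp : (C + ε) * (y - x) + ((K:ℝ) + 1) * ε
        = C * (y - x) + ε * ((y - x) + (K:ℝ) + 1) := by ring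
    linarith
  -- symmetric wrap-up
  intro x hx y hy
  rcases le_total x y with h | h
  · rw [abs_of_nonneg (by linarith)]; exact main x hx y hy h
  · rw [abs_of_nonpos (by linarith), ← norm_sub_rev]
    have := main y hy x hx h
    linarith [this]

lemma curve_facts (κ₁ κ₂ : ℝ) {P Q : Matrix (Fin 3) (Fin 3) ℝ} (γ : C1Curve 0 1)
    (hcs : ConstantSpeed γ) (hm : MemP κ₁ κ₂ P Q γ) :
    0 < clength γ ∧
    (∀ t ∈ Icc (0:ℝ) 1, ∀ u ∈ Icc (0:ℝ) 1, ‖γ.toFun u - γ.toFun t‖ ≤ clength γ * |u - t|) ∧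
    (∀ t ∈ Icc (0:ℝ) 1, ∀ u ∈ Icc (0:ℝ) 1,
      ‖γ.toFun u - γ.toFun t - (u - t) • γ.deriv t‖ ≤
        (clength γ)^2 * (1 + max |κ₁| |κ₂|) * (u - t)^2) := by
  set L := clength γ with hLdef
  have h0I : (0:ℝ) ∈ Icc (0:ℝ) 1 := ⟨le_refl 0, zero_le_one⟩
  have hL0 : ‖γ.deriv 0‖ = L := hcs 0 h0I
  have hLpos : 0 < L := hL0 ▸ norm_pos_iff.mpr (γ.regular 0 h0I)
  set M := max |κ₁| |κ₂| with hMdef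
  have hM0 : 0 ≤ M := (abs_nonneg κ₁).trans (le_max_left _ _)
  obtain ⟨hmi, ⟨K, hlip⟩, κ, ⟨hκm, hκae⟩, hinf, _, hsup⟩ := hm
  -- a.e. |κ| ≤ M
  have hbound : ∀ᵐ t ∂μ01, |κ t| ≤ M := by
    have h1 : ∀ᵐ t ∂μ01, (fun t => ((κ t : ℝ) : EReal)) t ≤
        essSup (fun t => ((κ t : ℝ) : EReal)) μ01 := ae_le_essSup
    have h2 : ∀ᵐ t ∂μ01, essInf (fun t => ((κ t : ℝ) : EReal)) μ01 ≤
        (fun t => ((κ t : ℝ) : EReal)) t := ae_essInf_le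
    filter_upwards [h1, h2] with t ht1 ht2
    have hlt2 : ((κ t : ℝ) : EReal) < ((κ₂ : ℝ) : EReal) := lt_of_le_of_lt ht1 hsup
    have hlt1 : ((κ₁ : ℝ) : EReal) < ((κ t : ℝ) : EReal) := lt_of_lt_of_le hinf ht2
    rw [EReal.coe_lt_coe_iff] at hlt1 hlt2
    rw [abs_le]
    constructor
    · have := neg_abs_le κ₁
      have := le_max_left |κ₁| |κ₂|
      linarith
    · have := le_abs_self κ₂
      have := le_max_right |κ₁| |κ₂|
      linarith
  -- the normalized derivative
  set g : ℝ → E3 := fun t => L⁻¹ • γ.deriv t with hgdef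
  have hEq : ∀ t ∈ Icc (0:ℝ) 1, tangent γ t = g t := by
    intro t ht; rw [tangent, hcs t ht]
  have hgLip : LipschitzOnWith (‖L⁻¹‖₊ * K) g (Icc 0 1) :=
    (lipschitzWith_smul L⁻¹).comp_lipschitzOnWith hlip
  have htan1 : ∀ t ∈ Icc (0:ℝ) 1, ‖tangent γ t‖ = 1 := by
    intro t ht
    rw [hEq t ht, hgdef]
    simp only [norm_smul, Real.norm_eq_abs, abs_of_pos (inv_pos.mpr hLpos), hcs t ht]
    field_simp
    exact hLdef.symm
  -- a.e. bound for the derivative of g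
  have hae2 : ∀ᵐ t ∂(volume.restrict (Icc (0:ℝ) 1)),
      HasDerivWithinAt g (‖γ.deriv t‖ • (-(γ.toFun t) + κ t • normal γ t)) (Icc 0 1) t ∧
      ‖‖γ.deriv t‖ • (-(γ.toFun t) + κ t • normal γ t)‖ ≤ L * (1 + M) := by
    have hres : μ01 = volume.restrict (Icc (0:ℝ) 1) := rfl
    rw [← hres]
    filter_upwards [hκae, hbound, ae_restrict_mem (μ := volume) (s := Icc (0:ℝ) 1)
      measurableSet_Icc] with t hdt hbt htI
    constructor
    · exact hdt.congr (fun s hs => (hEq s hs).symm) ((hEq t htI).symm)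
    · rw [norm_smul, Real.norm_eq_abs, abs_of_nonneg (norm_nonneg _), hcs t htI]
      have hn1 : ‖normal γ t‖ ≤ 1 := by
        have := norm_cross_le (γ.toFun t) (tangent γ t)
        rw [γ.mem_sphere t htI, htan1 t htI] at this
        simpa [normal] using this
      have hb : ‖-(γ.toFun t) + κ t • normal γ t‖ ≤ 1 + M := by
        calc ‖-(γ.toFun t) + κ t • normal γ t‖ ≤ ‖-(γ.toFun t)‖ + ‖κ t • normal γ t‖ :=
              norm_add_le _ _
          _ ≤ 1 + M := by
              rw [norm_neg, γ.mem_sphere t htI, norm_smul, Real.norm_eq_abs]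
              have h3 : |κ t| * ‖normal γ t‖ ≤ M * 1 :=
                mul_le_mul hbt hn1 (norm_nonneg _) hM0
              linarith
      exact mul_le_mul_of_nonneg_left hb hLpos.le
  -- key lemma: Lipschitz bound for g
  have hgbd := key g (fun t => ‖γ.deriv t‖ • (-(γ.toFun t) + κ t • normal γ t))
    (‖L⁻¹‖₊ * K) hgLip (L * (1 + M)) (by positivity) hae2
  -- transfer to γ.deriv
  have hdbd : ∀ x ∈ Icc (0:ℝ) 1, ∀ y ∈ Icc (0:ℝ) 1,
      ‖γ.deriv y - γ.deriv x‖ ≤ L^2 * (1 + M) * |y - x| := by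
    intro x hx y hy
    have h1 := hgbd x hx y hy
    have h2 : γ.deriv y - γ.deriv x = L • (g y - g x) := by
      rw [hgdef]
      simp only [smul_sub, smul_inv_smul₀ hLpos.ne']
    rw [h2, norm_smul, Real.norm_eq_abs, abs_of_pos hLpos]
    calc L * ‖g y - g x‖ ≤ L * (L * (1 + M) * |y - x|) :=
          mul_le_mul_of_nonneg_left h1 hLpos.le
      _ = L^2 * (1 + M) * |y - x| := by ring
  refine ⟨hLpos, ?_, ?_⟩
  · -- Lipschitz bound for toFun
    intro t ht u hu
    have := Convex.norm_image_sub_le_of_norm_hasDerivWithin_le (f := γ.toFun)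
      (f' := γ.deriv) (s := Icc (0:ℝ) 1) (C := L)
      (fun r hr => γ.hasDeriv r hr) (fun r hr => le_of_eq (hcs r hr)) (convex_Icc 0 1) ht hu
    simpa [Real.norm_eq_abs] using this
  · -- chord estimate
    intro t ht u hu
    set s : Set ℝ := Icc (min t u) (max t u) with hsdef
    have hsub : s ⊆ Icc (0:ℝ) 1 := by
      intro r hr
      constructor
      · exact le_trans (le_min ht.1 hu.1) hr.1
      · exact le_trans hr.2 (max_le ht.2 hu.2)
    have hF : ∀ r ∈ s, HasDerivWithinAt (fun r => γ.toFun r - r • γ.deriv t)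
        (γ.deriv r - γ.deriv t) s r := by
      intro r hr
      refine HasDerivWithinAt.sub ((γ.hasDeriv r (hsub hr)).mono hsub) ?_
      have h4 : HasDerivAt (fun y : ℝ => y • γ.deriv t) ((1:ℝ) • γ.deriv t) r :=
        (hasDerivAt_id r).smul_const (γ.deriv t)
      rw [one_smul] at h4
      exact h4.hasDerivWithinAt
    have hFb : ∀ r ∈ s, ‖γ.deriv r - γ.deriv t‖ ≤ L^2 * (1 + M) * |u - t| := by
      intro r hr
      refine (hdbd t ht r (hsub hr)).trans ?_
      have hr1 : min t u ≤ r := hr.1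
      have hr2 : r ≤ max t u := hr.2
      have hrt : |r - t| ≤ |u - t| := by
        rcases le_total t u with h | h
        · rw [min_eq_left h] at hr1; rw [max_eq_right h] at hr2
          rw [abs_of_nonneg (by linarith), abs_of_nonneg (by linarith)]
          linarith
        · rw [min_eq_right h] at hr1; rw [max_eq_left h] at hr2
          rw [abs_of_nonpos (by linarith), abs_of_nonpos (by linarith)]
          linarith
      have hpos : (0:ℝ) ≤ L^2 * (1 + M) := by positivity
      exact mul_le_mul_of_nonneg_left hrt hpos
    have hts : t ∈ s := ⟨min_le_left _ _, le_max_left _ _⟩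
    have hus : u ∈ s := ⟨min_le_right _ _, le_max_right _ _⟩
    have := Convex.norm_image_sub_le_of_norm_hasDerivWithin_le hF hFb
      (convex_Icc _ _) hts hus
    have heq : (γ.toFun u - u • γ.deriv t) - (γ.toFun t - t • γ.deriv t)
        = γ.toFun u - γ.toFun t - (u - t) • γ.deriv t := by
      rw [sub_smul]; abel
    rw [heq] at this
    refine this.trans (le_of_eq ?_)
    rw [Real.norm_eq_abs]
    have h9 : |u - t| * |u - t| = (u - t)^2 := by rw [abs_mul_abs_self]; ring
    rw [mul_assoc, h9]


set_option maxHeartbeats 2000000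

/-- if `α_k, α₀ ∈ 𝓟_{κ₁}^{κ₂}(P,Q)` are parametrized with constant speed and
`d⁰(α_k, α₀) → 0`, then `α̇_k → α̇₀` uniformly on `[0,1]`. -/
theorem stmt_13 (κ₁ κ₂ : ℝ) (h12 : κ₁ < κ₂) (P Q : SO3)
    (A : ℕ → C1Curve 0 1) (α₀ : C1Curve 0 1)
    (hA : ∀ k, ConstantSpeed (A k) ∧
      MemP κ₁ κ₂ (P : Matrix (Fin 3) (Fin 3) ℝ) (Q : Matrix (Fin 3) (Fin 3) ℝ) (A k))
    (hα : ConstantSpeed α₀ ∧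
      MemP κ₁ κ₂ (P : Matrix (Fin 3) (Fin 3) ℝ) (Q : Matrix (Fin 3) (Fin 3) ℝ) α₀)
    (hconv : Filter.Tendsto (fun k => d0 (A k) α₀) Filter.atTop (𝓝 0)) :
    TendstoUniformlyOn (fun k t => (A k).deriv t) (fun t => α₀.deriv t)
      Filter.atTop (Set.Icc (0:ℝ) 1) := by
  classical
  obtain ⟨hcs₀, hm₀⟩ := hα
  obtain ⟨hL₀pos, hlip₀, hchord₀⟩ := curve_facts κ₁ κ₂ α₀ hcs₀ hm₀
  set L₀ := clength α₀ with hL₀def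
  set M := max |κ₁| |κ₂| with hMdef
  have hM0 : 0 ≤ M := (abs_nonneg κ₁).trans (le_max_left _ _)
  set M' := 1 + M with hM'def
  have hM'1 : 1 ≤ M' := by linarith
  have hM'pos : 0 < M' := by linarith
  have hfacts := fun k => curve_facts κ₁ κ₂ (A k) (hA k).1 (hA k).2
  have h0I : (0:ℝ) ∈ Icc (0:ℝ) 1 := ⟨le_refl _, zero_le_one⟩
  -- pointwise closeness in norm
  have hd : ∀ k, ∀ t ∈ Icc (0:ℝ) 1, ‖(A k).toFun t - α₀.toFun t‖ ≤ d0 (A k) α₀ := by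
    intro k t ht
    have h1 : ‖(A k).toFun t - α₀.toFun t‖ ≤ sdist ((A k).toFun t) (α₀.toFun t) :=
      norm_sub_le_sdist _ _ ((A k).mem_sphere t ht) (α₀.mem_sphere t ht)
    refine h1.trans ?_
    rw [d0]
    have hbdd : BddAbove (Set.range fun r : Icc (0:ℝ) 1 =>
        sdist ((A k).toFun ↑r) (α₀.toFun ↑r)) := by
      refine ⟨π, ?_⟩; rintro x ⟨r, rfl⟩; exact Real.arccos_le_pi _
    exact le_ciSup hbdd (⟨t, ht⟩ : Icc (0:ℝ) 1)
  -- length bound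
  have hlen : ∀ k, d0 (A k) α₀ ≤ 1/(16*M') → clength (A k) ≤ 4*L₀ + 1 := by
    intro k hεk
    set Lk := clength (A k) with hLkdef
    obtain ⟨hLk, hlipk, hchordk⟩ := hfacts k
    rw [← hLkdef] at hLk
    by_cases hcase : Lk ≤ 1/(2*M')
    · have h1 : 1/(2*M') ≤ 1 := by
        rw [div_le_one (by linarith)]; linarith
      linarith
    · push_neg at hcase
      have hLM : 1 < 2*Lk*M' := by
        have := (div_lt_iff₀ (by linarith : (0:ℝ) < 2*M')).mp hcase
        nlinarith
      set u := (2*Lk*M')⁻¹ with hu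
      have hupos : 0 < u := by positivity
      have hu1 : u ≤ 1 := by
        rw [hu]; exact inv_le_one_of_one_le₀ hLM.le
      have huI : u ∈ Icc (0:ℝ) 1 := ⟨hupos.le, hu1⟩
      have hch := hchordk 0 h0I u huI
      simp only [sub_zero] at hch
      rw [← hLkdef, ← hMdef] at hch
      have hn0 : ‖(A k).deriv 0‖ = Lk := (hA k).1 0 h0I
      have hlow : u*Lk - Lk^2*(1+M)*u^2 ≤ ‖(A k).toFun u - (A k).toFun 0‖ := by
        have h2 : ‖u • (A k).deriv 0‖ = u * Lk := by
          rw [norm_smul, Real.norm_eq_abs, abs_of_pos hupos, hn0]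
        have h3 := norm_sub_norm_le (u • (A k).deriv 0)
          ((A k).toFun u - (A k).toFun 0)
        rw [h2, norm_sub_rev (u • (A k).deriv 0) ((A k).toFun u - (A k).toFun 0)] at h3
        linarith
      have hup : ‖(A k).toFun u - (A k).toFun 0‖ ≤ L₀*u + 2*(d0 (A k) α₀) := by
        have t1 := hd k u huI
        have t2 := hd k 0 h0I
        have t3 := hlip₀ 0 h0I u huI
        rw [sub_zero, abs_of_pos hupos] at t3
        have hid : (A k).toFun u - (A k).toFun 0 =
            ((A k).toFun u - α₀.toFun u) + (α₀.toFun u - α₀.toFun 0)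
              - ((A k).toFun 0 - α₀.toFun 0) := by abel
        calc ‖(A k).toFun u - (A k).toFun 0‖
            ≤ ‖((A k).toFun u - α₀.toFun u) + (α₀.toFun u - α₀.toFun 0)‖
              + ‖(A k).toFun 0 - α₀.toFun 0‖ := by rw [hid]; exact norm_sub_le _ _
          _ ≤ ‖(A k).toFun u - α₀.toFun u‖ + ‖α₀.toFun u - α₀.toFun 0‖
              + ‖(A k).toFun 0 - α₀.toFun 0‖ := by
                have := norm_add_le ((A k).toFun u - α₀.toFun u) (α₀.toFun u - α₀.toFun 0)
                linarith
          _ ≤ L₀*u + 2*(d0 (A k) α₀) := by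
                rw [mul_comm L₀ u] at t3
                rw [mul_comm L₀ u]
                linarith
      -- algebraic identities
      have hq1 : u * Lk = 1/(2*M') := by
        rw [hu]; field_simp
      have hq2 : Lk^2*(1+M)*u^2 = 1/(4*M') := by
        rw [hu, hM'def]; field_simp; ring
      have h5 : 1/(2*M') - 1/(4*M') ≤ L₀*u + 2*(d0 (A k) α₀) := by
        rw [← hq1, ← hq2]; linarith
      have h6 : L₀*u = L₀/(2*Lk*M') := by rw [hu]; ring
      -- multiply out
      have h7 : (1:ℝ)/(2*M') - 1/(4*M') = 1/(4*M') := by field_simp; ring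
      have h8 : 2*(d0 (A k) α₀) ≤ 1/(8*M') := by
        have : (2:ℝ)*(1/(16*M')) = 1/(8*M') := by field_simp; ring
        linarith
      have h9 : 1/(4*M') - 1/(8*M') = 1/(8*M') := by field_simp; ring
      have h10 : 1/(8*M') ≤ L₀/(2*Lk*M') := by
        rw [← h6]; linarith
      -- conclude Lk ≤ 4 L₀
      have h11 := mul_le_mul_of_nonneg_left h10 (by positivity : (0:ℝ) ≤ 8*M'*Lk)
      have h12 : 8*M'*Lk * (1/(8*M')) = Lk := by field_simp
      have h13 : 8*M'*Lk * (L₀/(2*Lk*M')) = 4*L₀ := by field_simp; ring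
      rw [h12, h13] at h11
      linarith
  -- main convergence
  rw [Metric.tendstoUniformlyOn_iff]
  intro ε hε
  set B := 4*L₀+1 with hBdef
  have hBpos : 0 < B := by linarith
  set Cm := (B^2 + L₀^2) * M' + 1 with hCmdef
  have hCmpos : 0 < Cm := by
    have : 0 ≤ (B^2 + L₀^2) * M' := mul_nonneg (by positivity) (by linarith)
    linarith
  set s := min (1/2) (ε/(4*Cm)) with hsdef
  have hspos : 0 < s := lt_min (by norm_num) (by positivity)
  have hs2 : s ≤ 1/2 := min_le_left _ _
  have hs3 : Cm * s ≤ ε/4 := by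
    have h1 : s ≤ ε/(4*Cm) := min_le_right _ _
    have h2 := mul_le_mul_of_nonneg_left h1 hCmpos.le
    have h3 : Cm * (ε/(4*Cm)) = ε/4 := by field_simp
    linarith
  have hδpos : 0 < min (1/(16*M')) (s*ε/8) := lt_min (by positivity) (by positivity)
  have hev1 : ∀ᶠ k in atTop, d0 (A k) α₀ < min (1/(16*M')) (s*ε/8) :=
    hconv.eventually_lt_const hδpos
  filter_upwards [hev1] with k hk
  intro t ht
  have hεk1 : d0 (A k) α₀ ≤ 1/(16*M') := (hk.trans_le (min_le_left _ _)).le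
  have hεk2 : d0 (A k) α₀ < s*ε/8 := hk.trans_le (min_le_right _ _)
  have hLkB : clength (A k) ≤ B := hlen k hεk1
  obtain ⟨hLk, hlipk, hchordk⟩ := hfacts k
  -- choose comparison point u
  set u := if t ≤ 1/2 then t + s else t - s with hudef
  have huI : u ∈ Icc (0:ℝ) 1 := by
    rw [hudef]; split_ifs with h
    · exact ⟨by linarith [ht.1], by linarith⟩
    · push_neg at h
      exact ⟨by linarith, by linarith [ht.2]⟩
  have hut : |u - t| = s := by
    rw [hudef]; split_ifs with h
    · rw [abs_of_pos (by linarith)]; ring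
    · rw [abs_of_neg (by linarith)]; ring
  have hut2 : (u - t)^2 = s^2 := by rw [← sq_abs, hut]
  -- chord estimates
  have hc1 := hchordk t ht u huI
  have hc2 := hchord₀ t ht u huI
  rw [← hMdef] at hc1
  have hCk : (clength (A k))^2 * (1 + M) * (u-t)^2 ≤ B^2 * M' * s^2 := by
    rw [hut2, hM'def]
    have h1 : (clength (A k))^2 ≤ B^2 := by nlinarith
    have h2 : (clength (A k))^2 * (1+M) ≤ B^2 * (1+M) :=
      mul_le_mul_of_nonneg_right h1 (by linarith)
    exact mul_le_mul_of_nonneg_right h2 (sq_nonneg s)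
  have hC0 : L₀^2 * (1 + M) * (u-t)^2 = L₀^2 * M' * s^2 := by
    rw [hut2, hM'def]
  -- the combination identity
  have hid : (u-t) • ((A k).deriv t - α₀.deriv t) =
      (((A k).toFun u - α₀.toFun u) - ((A k).toFun t - α₀.toFun t))
      - ((A k).toFun u - (A k).toFun t - (u-t) • (A k).deriv t)
      + (α₀.toFun u - α₀.toFun t - (u-t) • α₀.deriv t) := by
    rw [smul_sub]; abel
  have hnorm : s * ‖(A k).deriv t - α₀.deriv t‖ ≤
      2 * (d0 (A k) α₀) + (B^2 * M' + L₀^2 * M') * s^2 := by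
    have hl : ‖(u-t) • ((A k).deriv t - α₀.deriv t)‖
        = s * ‖(A k).deriv t - α₀.deriv t‖ := by
      rw [norm_smul, Real.norm_eq_abs, hut]
    rw [← hl, hid]
    have n1 : ‖((A k).toFun u - α₀.toFun u) - ((A k).toFun t - α₀.toFun t)‖
        ≤ 2 * (d0 (A k) α₀) := by
      have := norm_sub_le ((A k).toFun u - α₀.toFun u) ((A k).toFun t - α₀.toFun t)
      have := hd k u huI
      have := hd k t ht
      linarith
    have n2 : ‖(A k).toFun u - (A k).toFun t - (u-t) • (A k).deriv t‖ ≤ B^2 * M' * s^2 :=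
      hc1.trans hCk
    have n3 : ‖α₀.toFun u - α₀.toFun t - (u-t) • α₀.deriv t‖ ≤ L₀^2 * M' * s^2 :=
      hc2.trans (le_of_eq hC0)
    calc ‖(((A k).toFun u - α₀.toFun u) - ((A k).toFun t - α₀.toFun t))
          - ((A k).toFun u - (A k).toFun t - (u-t) • (A k).deriv t)
          + (α₀.toFun u - α₀.toFun t - (u-t) • α₀.deriv t)‖
        ≤ ‖(((A k).toFun u - α₀.toFun u) - ((A k).toFun t - α₀.toFun t))
          - ((A k).toFun u - (A k).toFun t - (u-t) • (A k).deriv t)‖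
          + ‖α₀.toFun u - α₀.toFun t - (u-t) • α₀.deriv t‖ := norm_add_le _ _
      _ ≤ ‖((A k).toFun u - α₀.toFun u) - ((A k).toFun t - α₀.toFun t)‖
          + ‖(A k).toFun u - (A k).toFun t - (u-t) • (A k).deriv t‖
          + ‖α₀.toFun u - α₀.toFun t - (u-t) • α₀.deriv t‖ := by
            have := norm_sub_le (((A k).toFun u - α₀.toFun u)
              - ((A k).toFun t - α₀.toFun t))
              ((A k).toFun u - (A k).toFun t - (u-t) • (A k).deriv t)
            linarith
      _ ≤ 2 * (d0 (A k) α₀) + (B^2 * M' + L₀^2 * M') * s^2 := by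
            rw [add_mul]; linarith
  -- final numeric estimate
  rw [dist_eq_norm, norm_sub_rev]
  have hfin : s * ‖(A k).deriv t - α₀.deriv t‖ < s * ε := by
    have e1 : 2 * (d0 (A k) α₀) < s*ε/4 := by linarith
    have e2 : (B^2 * M' + L₀^2 * M') * s^2 ≤ (ε/4) * s := by
      have e3 : (B^2 * M' + L₀^2 * M') * s ≤ Cm * s := by
        have : B^2 * M' + L₀^2 * M' ≤ Cm := by rw [hCmdef]; nlinarith
        nlinarith
      have e4 : (B^2 * M' + L₀^2 * M') * s^2 = ((B^2 * M' + L₀^2 * M') * s) * s := by ring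
      rw [e4]
      calc ((B^2 * M' + L₀^2 * M') * s) * s ≤ (Cm * s) * s := by nlinarith
        _ ≤ (ε/4) * s := by nlinarith
    nlinarith
  exact lt_of_mul_lt_mul_left hfin hspos.le


end Curves
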